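/- Let 𝕊 ⊆ {1,…,n} be a random set with p_i = P(i ∈ 𝕊) > 0 and define y⁺ by y⁺_i = ŷ_i if i ∈ 𝕊 and y⁺_i = y_i otherwise. Let {v_i} be ESO parameters of the block operator with blocks C_i = S_i^{1/2} A_i T^{1/2} with respect to 𝕊, and Q = diag(p_1^{-1} I, …, p_n^{-1} I). Then for any x ∈ 𝕏 and any c > 0: 2 E_𝕊 ⟨Q A x, y⁺ − y⟩ ≥ − E_𝕊 { (1/c) ‖x‖²_{T^{-1}} + c (max_i v_i/p_i) ‖y⁺ − y‖²_{Q S^{-1}} }. -/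

import Mathlib

open scoped RealInnerProductSpace

/-- Probability that index `i` belongs to the random set, for a sampling given by the
probabilities `P R` of each set `R ⊆ {1,…,n}`. -/
noncomputable def probOf {n : ℕ} (P : Finset (Fin n) → ℝ) (i : Fin n) : ℝ :=
  ∑ R : Finset (Fin n), if i ∈ R then P R else 0

lemma selfadj_inner' {E : Type*} [NormedAddCommGroup E] [InnerProductSpace ℝ E]
    [CompleteSpace E] {B : E →L[ℝ] E} (hB : IsSelfAdjoint B) (a b : E) :
    ⟪B a, b⟫ = ⟪a, B b⟫ := by
  conv_lhs => rw [← hB.adjoint_eq]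
  rw [ContinuousLinearMap.adjoint_inner_left]

lemma two_inner_ge' {E : Type*} [NormedAddCommGroup E] [InnerProductSpace ℝ E]
    (u w : E) (c : ℝ) (hc : 0 < c) :
    -((1 / c) * ‖u‖ ^ 2 + c * ‖w‖ ^ 2) ≤ 2 * ⟪u, w⟫ := by
  have h0 : (0 : ℝ) ≤ ⟪u + c • w, u + c • w⟫ := real_inner_self_nonneg
  have hexp : ⟪u + c • w, u + c • w⟫
      = ‖u‖ ^ 2 + 2 * c * ⟪u, w⟫ + c ^ 2 * ‖w‖ ^ 2 := by
    rw [real_inner_add_add_self, real_inner_smul_right, real_inner_smul_left,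
      real_inner_smul_right, real_inner_self_eq_norm_sq, real_inner_self_eq_norm_sq]
    ring
  rw [hexp] at h0
  have hc' : c ≠ 0 := ne_of_gt hc
  have h1 : (0 : ℝ) ≤ (1 / c) * (‖u‖ ^ 2 + 2 * c * ⟪u, w⟫ + c ^ 2 * ‖w‖ ^ 2) :=
    mul_nonneg (by positivity) h0
  have h2 : (1 / c) * (‖u‖ ^ 2 + 2 * c * ⟪u, w⟫ + c ^ 2 * ‖w‖ ^ 2)
      = (1 / c) * ‖u‖ ^ 2 + 2 * ⟪u, w⟫ + c * ‖w‖ ^ 2 := by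
    field_simp
  rw [h2] at h1
  linarith

/-- Key ESO estimate, Lemma 2 of the paper.
Let `𝕊` be a random set with `p_i = P(i ∈ 𝕊) > 0`, let `y⁺_i = ŷ_i` for `i ∈ 𝕊` and
`y⁺_i = y_i` otherwise, and let `{v_i}` be ESO parameters of the block operator with
blocks `C_i = S_i^{1/2} A_i T^{1/2}`.  Then for every `x` and every `c > 0`:
`2 E_𝕊 ⟨Q A x, y⁺ − y⟩ ≥ − E_𝕊 { (1/c) ‖x‖²_{T⁻¹} + c (max_i v_i/p_i) ‖y⁺ − y‖²_{Q S⁻¹} }`. -/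
theorem eso_inner_product_estimate {n : ℕ} (hn : 0 < n)
    (X : Type*) [NormedAddCommGroup X] [InnerProductSpace ℝ X] [CompleteSpace X]
    (Y : Fin n → Type*) [∀ i, NormedAddCommGroup (Y i)] [∀ i, InnerProductSpace ℝ (Y i)]
    [∀ i, CompleteSpace (Y i)]
    (A : ∀ i, X →L[ℝ] Y i)
    (T Tsqrt Tinv : X →L[ℝ] X) (S Ssqrt Sinv : ∀ i, Y i →L[ℝ] Y i)
    -- step size operators: self-adjoint, positive definite, with square roots and inverses
    (hT : IsSelfAdjoint T) (hTpos : ∀ x : X, x ≠ 0 → 0 < ⟪T x, x⟫)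
    (hTsqrt : IsSelfAdjoint Tsqrt) (hTsq : Tsqrt.comp Tsqrt = T)
    (hTinv : Tinv.comp T = ContinuousLinearMap.id ℝ X ∧
      T.comp Tinv = ContinuousLinearMap.id ℝ X)
    (hS : ∀ i, IsSelfAdjoint (S i)) (hSpos : ∀ i, ∀ u : Y i, u ≠ 0 → 0 < ⟪S i u, u⟫)
    (hSsqrt : ∀ i, IsSelfAdjoint (Ssqrt i)) (hSsq : ∀ i, (Ssqrt i).comp (Ssqrt i) = S i)
    (hSinv : ∀ i, (Sinv i).comp (S i) = ContinuousLinearMap.id ℝ (Y i) ∧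
      (S i).comp (Sinv i) = ContinuousLinearMap.id ℝ (Y i))
    -- the sampling
    (P : Finset (Fin n) → ℝ) (hP0 : ∀ R, 0 ≤ P R) (hP1 : ∑ R : Finset (Fin n), P R = 1)
    (hp : ∀ i, 0 < probOf P i)
    -- ESO parameters of S^{1/2} A T^{1/2}
    (v : Fin n → ℝ)
    (hESO : ∀ z : ∀ i, Y i,
      ∑ R : Finset (Fin n), P R *
        ‖∑ i ∈ R, (ContinuousLinearMap.adjoint ((Ssqrt i).comp ((A i).comp Tsqrt))) (z i)‖ ^ 2
      ≤ ∑ i, probOf P i * v i * ‖z i‖ ^ 2)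
    (yhat y : ∀ i, Y i) :
    let yplus : Finset (Fin n) → ∀ i, Y i := fun R i => if i ∈ R then yhat i else y i
    let γsq : ℝ := Finset.univ.sup' (Finset.univ_nonempty_iff.mpr ⟨⟨0, hn⟩⟩)
      (fun i => v i / probOf P i)
    ∀ (x : X) (c : ℝ), 0 < c →
      - (∑ R : Finset (Fin n), P R * ((1 / c) * ⟪Tinv x, x⟫ +
          c * γsq * ∑ i, (probOf P i)⁻¹ * ⟪Sinv i (yplus R i - y i), yplus R i - y i⟫))
      ≤ 2 * ∑ R : Finset (Fin n), P R * ∑ i, (probOf P i)⁻¹ * ⟪A i x, yplus R i - y i⟫ := by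
  intro yplus γsq x c hc
  have hyp : ∀ (R : Finset (Fin n)) (i : Fin n),
      yplus R i = if i ∈ R then yhat i else y i := fun _ _ => rfl
  have hγ : γsq = Finset.univ.sup' (Finset.univ_nonempty_iff.mpr ⟨⟨0, hn⟩⟩)
      (fun i => v i / probOf P i) := rfl
  set p : Fin n → ℝ := probOf P with hpdef
  -- the vector u with T^{1/2} u = x
  set u : X := Tsqrt (Tinv x) with hudef
  have hTid : ∀ a : X, T (Tinv a) = a := by
    intro a
    have h := congrArg (fun f : X →L[ℝ] X => f a) hTinv.2
    simpa using h
  have hu : Tsqrt u = x := by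
    rw [hudef, ← ContinuousLinearMap.comp_apply, hTsq, hTid]
  have hunorm : ⟪Tinv x, x⟫ = ‖u‖ ^ 2 := by
    rw [← real_inner_self_eq_norm_sq]
    calc ⟪Tinv x, x⟫ = ⟪Tinv x, Tsqrt u⟫ := by rw [hu]
      _ = ⟪Tsqrt (Tinv x), u⟫ := (selfadj_inner' hTsqrt _ _).symm
      _ = ⟪u, u⟫ := by rw [← hudef]
  -- the vectors z i with S_i^{1/2} (z i) = yhat i - y i
  have hSid : ∀ (i : Fin n) (a : Y i), S i (Sinv i a) = a := by
    intro i a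
    have h := congrArg (fun f : Y i →L[ℝ] Y i => f a) (hSinv i).2
    simpa using h
  set z : ∀ i, Y i := fun i => Ssqrt i (Sinv i (yhat i - y i)) with hzdef
  have hz : ∀ i, Ssqrt i (z i) = yhat i - y i := by
    intro i
    show Ssqrt i (Ssqrt i (Sinv i (yhat i - y i))) = yhat i - y i
    rw [← ContinuousLinearMap.comp_apply, hSsq, hSid]
  have hznorm : ∀ i, ⟪Sinv i (yhat i - y i), yhat i - y i⟫ = ‖z i‖ ^ 2 := by
    intro i
    rw [← real_inner_self_eq_norm_sq]
    calc ⟪Sinv i (yhat i - y i), yhat i - y i⟫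
        = ⟪Sinv i (yhat i - y i), Ssqrt i (z i)⟫ := by rw [hz i]
      _ = ⟪Ssqrt i (Sinv i (yhat i - y i)), z i⟫ := (selfadj_inner' (hSsqrt i) _ _).symm
      _ = ⟪z i, z i⟫ := rfl
  -- the random vector w
  set w : Finset (Fin n) → X := fun R => ∑ i ∈ R,
    (ContinuousLinearMap.adjoint ((Ssqrt i).comp ((A i).comp Tsqrt))) ((p i)⁻¹ • z i)
    with hwdef
  have hterm : ∀ i, (p i)⁻¹ * ⟪A i x, yhat i - y i⟫
      = ⟪u, (ContinuousLinearMap.adjoint ((Ssqrt i).comp ((A i).comp Tsqrt)))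
          ((p i)⁻¹ • z i)⟫ := by
    intro i
    rw [map_smul, real_inner_smul_right]
    congr 1
    rw [ContinuousLinearMap.adjoint_inner_right, ContinuousLinearMap.comp_apply,
      ContinuousLinearMap.comp_apply, selfadj_inner' (hSsqrt i), hz i, hu]
  have hinner : ∀ R : Finset (Fin n),
      (∑ i, (p i)⁻¹ * ⟪A i x, yplus R i - y i⟫) = ⟪u, w R⟫ := by
    intro R
    have hvan : ∀ i ∈ Finset.univ, i ∉ R →
        (p i)⁻¹ * ⟪A i x, yplus R i - y i⟫ = 0 := by
      intro i _ hi
      simp [hyp, hi]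
    rw [← Finset.sum_subset R.subset_univ hvan, hwdef, inner_sum]
    refine Finset.sum_congr rfl fun i hi => ?_
    rw [hyp, if_pos hi]
    exact hterm i
  -- expectation of the weighted distance term
  have hE : (∑ R : Finset (Fin n), P R *
        ∑ i, (p i)⁻¹ * ⟪Sinv i (yplus R i - y i), yplus R i - y i⟫)
      = ∑ i, ‖z i‖ ^ 2 := by
    have h1 : ∀ R : Finset (Fin n), P R *
        ∑ i, (p i)⁻¹ * ⟪Sinv i (yplus R i - y i), yplus R i - y i⟫
        = ∑ i, (if i ∈ R then P R else 0) * ((p i)⁻¹ * ‖z i‖ ^ 2) := by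
      intro R
      rw [Finset.mul_sum]
      refine Finset.sum_congr rfl fun i _ => ?_
      by_cases h : i ∈ R
      · rw [hyp, if_pos h, hznorm i, if_pos h]
      · simp [hyp, h]
    rw [Finset.sum_congr rfl fun R _ => h1 R, Finset.sum_comm]
    refine Finset.sum_congr rfl fun i _ => ?_
    rw [← Finset.sum_mul]
    have h2 : (∑ R : Finset (Fin n), if i ∈ R then P R else 0) = p i := rfl
    rw [h2, ← mul_assoc, mul_inv_cancel₀ (ne_of_gt (hp i)), one_mul]
  -- distributing the expectation on the left-hand side
  have hLHS : (∑ R : Finset (Fin n), P R * ((1 / c) * ⟪Tinv x, x⟫ +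
        c * γsq * ∑ i, (p i)⁻¹ * ⟪Sinv i (yplus R i - y i), yplus R i - y i⟫))
      = (1 / c) * ‖u‖ ^ 2 + c * γsq * ∑ i, ‖z i‖ ^ 2 := by
    rw [← hE, ← hunorm]
    have h1 : ∀ R : Finset (Fin n), P R * ((1 / c) * ⟪Tinv x, x⟫ +
        c * γsq * ∑ i, (p i)⁻¹ * ⟪Sinv i (yplus R i - y i), yplus R i - y i⟫)
        = P R * ((1 / c) * ⟪Tinv x, x⟫) + c * γsq *
          (P R * ∑ i, (p i)⁻¹ * ⟪Sinv i (yplus R i - y i), yplus R i - y i⟫) := by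
      intro R; ring
    rw [Finset.sum_congr rfl fun R _ => h1 R, Finset.sum_add_distrib,
      ← Finset.sum_mul, hP1, one_mul, ← Finset.mul_sum]
  -- key estimate on the expected squared norm of w
  have key4 : (∑ R : Finset (Fin n), P R * ‖w R‖ ^ 2) ≤ γsq * ∑ i, ‖z i‖ ^ 2 := by
    have h1 := hESO (fun i => (p i)⁻¹ • z i)
    have h2 : (∑ i, probOf P i * v i * ‖(p i)⁻¹ • z i‖ ^ 2)
        ≤ γsq * ∑ i, ‖z i‖ ^ 2 := by
      rw [Finset.mul_sum]
      refine Finset.sum_le_sum fun i _ => ?_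
      have hpi := hp i
      have h3 : ‖(p i)⁻¹ • z i‖ ^ 2 = (p i)⁻¹ ^ 2 * ‖z i‖ ^ 2 := by
        rw [norm_smul, Real.norm_eq_abs, abs_of_pos (inv_pos.mpr hpi)]
        ring
      have h4 : probOf P i * v i * ((p i)⁻¹ ^ 2 * ‖z i‖ ^ 2)
          = (v i / p i) * ‖z i‖ ^ 2 := by
        have hne : p i ≠ 0 := ne_of_gt hpi
        show p i * v i * ((p i)⁻¹ ^ 2 * ‖z i‖ ^ 2) = (v i / p i) * ‖z i‖ ^ 2
        field_simp
      rw [h3, h4]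
      have hvi : v i / p i ≤ γsq := by
        rw [hγ]
        exact Finset.le_sup' (fun j => v j / probOf P j) (Finset.mem_univ i)
      exact mul_le_mul_of_nonneg_right hvi (sq_nonneg _)
    exact le_trans h1 h2
  -- pointwise inner-product lower bound, summed
  have key2 : -(∑ R : Finset (Fin n), P R * ((1 / c) * ‖u‖ ^ 2 + c * ‖w R‖ ^ 2))
      ≤ ∑ R : Finset (Fin n), P R * (2 * ⟪u, w R⟫) := by
    have h1 : ∀ R : Finset (Fin n), -(P R * ((1 / c) * ‖u‖ ^ 2 + c * ‖w R‖ ^ 2))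
        ≤ P R * (2 * ⟪u, w R⟫) := by
      intro R
      have h := mul_le_mul_of_nonneg_left (two_inner_ge' u (w R) c hc) (hP0 R)
      nlinarith [h]
    have h2 := Finset.sum_le_sum fun R (_ : R ∈ Finset.univ) => h1 R
    rw [Finset.sum_neg_distrib] at h2
    exact h2
  have key3 : (∑ R : Finset (Fin n), P R * ((1 / c) * ‖u‖ ^ 2 + c * ‖w R‖ ^ 2))
      = (1 / c) * ‖u‖ ^ 2 + c * ∑ R : Finset (Fin n), P R * ‖w R‖ ^ 2 := by
    have h1 : ∀ R : Finset (Fin n), P R * ((1 / c) * ‖u‖ ^ 2 + c * ‖w R‖ ^ 2)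
        = P R * ((1 / c) * ‖u‖ ^ 2) + c * (P R * ‖w R‖ ^ 2) := by
      intro R; ring
    rw [Finset.sum_congr rfl fun R _ => h1 R, Finset.sum_add_distrib,
      ← Finset.sum_mul, hP1, one_mul, ← Finset.mul_sum]
  -- assemble everything
  rw [hLHS]
  have hfin : (2 : ℝ) * ∑ R : Finset (Fin n), P R *
      ∑ i, (p i)⁻¹ * ⟪A i x, yplus R i - y i⟫
      = ∑ R : Finset (Fin n), P R * (2 * ⟪u, w R⟫) := by
    rw [Finset.mul_sum]
    refine Finset.sum_congr rfl fun R _ => ?_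
    rw [hinner R]
    ring
  rw [hfin]
  have hstep : -((1 / c) * ‖u‖ ^ 2 + c * γsq * ∑ i, ‖z i‖ ^ 2)
      ≤ -((1 / c) * ‖u‖ ^ 2 + c * ∑ R : Finset (Fin n), P R * ‖w R‖ ^ 2) := by
    have := mul_le_mul_of_nonneg_left key4 (le_of_lt hc)
    nlinarith [this]
  calc -((1 / c) * ‖u‖ ^ 2 + c * γsq * ∑ i, ‖z i‖ ^ 2)
      ≤ -((1 / c) * ‖u‖ ^ 2 + c * ∑ R : Finset (Fin n), P R * ‖w R‖ ^ 2) := hstep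
    _ = -(∑ R : Finset (Fin n), P R * ((1 / c) * ‖u‖ ^ 2 + c * ‖w R‖ ^ 2)) := by
        rw [key3]
    _ ≤ ∑ R : Finset (Fin n), P R * (2 * ⟪u, w R⟫) := key2
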